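/- For every integer m, the presented group ⟨a, b, c, d, x ∣ x·a⁻², x·b⁻², x·c⁻², x·d⁻², a·b·c·d·x^{−m}⟩ is isomorphic to the presented group ⟨a, b, c ∣ a²·b⁻², a²·c⁻², a²·(a^{2m−1}·b⁻¹·c⁻¹)⁻²⟩. -/

import Mathlib

open PresentedGroup

private lemma mk_rel_eq_one {α : Type*} {rels : Set (FreeGroup α)} {r : FreeGroup α}
    (h : r ∈ rels) : PresentedGroup.mk rels r = 1 :=
  (QuotientGroup.eq_one_iff _).mpr (Subgroup.subset_normalClosure h)

/-- For every integer `m`, the presented group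
`⟨a, b, c, d, x ∣ x·a⁻², x·b⁻², x·c⁻², x·d⁻², a·b·c·d·x^{−m}⟩` is isomorphic to
`⟨a, b, c ∣ a²·b⁻², a²·c⁻², a²·(a^{2m−1}·b⁻¹·c⁻¹)⁻²⟩`.
(Generators of the first group: `a,b,c,d,x = 0,1,2,3,4`.) -/
theorem stmt_6 (m : ℤ) :
    let rels₁ : Set (FreeGroup (Fin 5)) :=
      {FreeGroup.of 4 * FreeGroup.of 0 ^ (-2 : ℤ),
        FreeGroup.of 4 * FreeGroup.of 1 ^ (-2 : ℤ),
        FreeGroup.of 4 * FreeGroup.of 2 ^ (-2 : ℤ),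
        FreeGroup.of 4 * FreeGroup.of 3 ^ (-2 : ℤ),
        FreeGroup.of 0 * FreeGroup.of 1 * FreeGroup.of 2 * FreeGroup.of 3 *
          FreeGroup.of 4 ^ (-m)}
    let rels₂ : Set (FreeGroup (Fin 3)) :=
      {FreeGroup.of 0 ^ 2 * FreeGroup.of 1 ^ (-2 : ℤ),
        FreeGroup.of 0 ^ 2 * FreeGroup.of 2 ^ (-2 : ℤ),
        FreeGroup.of 0 ^ 2 *
          (FreeGroup.of 0 ^ (2 * m - 1) * (FreeGroup.of 1)⁻¹ * (FreeGroup.of 2)⁻¹) ^ (-2 : ℤ)}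
    Nonempty (PresentedGroup rels₁ ≃* PresentedGroup rels₂) := by
  intro rels₁ rels₂
  have ofmk₁ : ∀ i : Fin 5, PresentedGroup.mk rels₁ (FreeGroup.of i) = PresentedGroup.of i :=
    fun _ => rfl
  have ofmk₂ : ∀ i : Fin 3, PresentedGroup.mk rels₂ (FreeGroup.of i) = PresentedGroup.of i :=
    fun _ => rfl
  -- relator consequences in G₁
  have hA : PresentedGroup.of (rels := rels₁) 4 * PresentedGroup.of 0 ^ (-2 : ℤ) = 1 := by
    have h := mk_rel_eq_one (rels := rels₁) (Set.mem_insert _ _)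
    simpa only [map_mul, map_zpow, ofmk₁] using h
  have hB : PresentedGroup.of (rels := rels₁) 4 * PresentedGroup.of 1 ^ (-2 : ℤ) = 1 := by
    have h := mk_rel_eq_one (rels := rels₁)
      (Set.mem_insert_of_mem _ (Set.mem_insert _ _))
    simpa only [map_mul, map_zpow, ofmk₁] using h
  have hC : PresentedGroup.of (rels := rels₁) 4 * PresentedGroup.of 2 ^ (-2 : ℤ) = 1 := by
    have h := mk_rel_eq_one (rels := rels₁)
      (Set.mem_insert_of_mem _ (Set.mem_insert_of_mem _ (Set.mem_insert _ _)))
    simpa only [map_mul, map_zpow, ofmk₁] using h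
  have hD : PresentedGroup.of (rels := rels₁) 4 * PresentedGroup.of 3 ^ (-2 : ℤ) = 1 := by
    have h := mk_rel_eq_one (rels := rels₁)
      (Set.mem_insert_of_mem _ (Set.mem_insert_of_mem _ (Set.mem_insert_of_mem _
        (Set.mem_insert _ _))))
    simpa only [map_mul, map_zpow, ofmk₁] using h
  have hE : PresentedGroup.of (rels := rels₁) 0 * PresentedGroup.of 1 * PresentedGroup.of 2 *
      PresentedGroup.of 3 * PresentedGroup.of 4 ^ (-m) = 1 := by
    have h := mk_rel_eq_one (rels := rels₁)
      (Set.mem_insert_of_mem _ (Set.mem_insert_of_mem _ (Set.mem_insert_of_mem _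
        (Set.mem_insert_of_mem _ rfl))))
    simpa only [map_mul, map_zpow, ofmk₁] using h
  have hx : PresentedGroup.of (rels := rels₁) 4 = PresentedGroup.of 0 ^ (2 : ℤ) := by
    calc PresentedGroup.of (rels := rels₁) 4
        = (PresentedGroup.of (rels := rels₁) 4 * PresentedGroup.of 0 ^ (-2 : ℤ)) *
            PresentedGroup.of 0 ^ (2 : ℤ) := by group
      _ = PresentedGroup.of 0 ^ (2 : ℤ) := by rw [hA]; group
  have hxb : PresentedGroup.of (rels := rels₁) 4 = PresentedGroup.of 1 ^ (2 : ℤ) := by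
    calc PresentedGroup.of (rels := rels₁) 4
        = (PresentedGroup.of (rels := rels₁) 4 * PresentedGroup.of 1 ^ (-2 : ℤ)) *
            PresentedGroup.of 1 ^ (2 : ℤ) := by group
      _ = PresentedGroup.of 1 ^ (2 : ℤ) := by rw [hB]; group
  have hxc : PresentedGroup.of (rels := rels₁) 4 = PresentedGroup.of 2 ^ (2 : ℤ) := by
    calc PresentedGroup.of (rels := rels₁) 4
        = (PresentedGroup.of (rels := rels₁) 4 * PresentedGroup.of 2 ^ (-2 : ℤ)) *
            PresentedGroup.of 2 ^ (2 : ℤ) := by group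
      _ = PresentedGroup.of 2 ^ (2 : ℤ) := by rw [hC]; group
  have hxd : PresentedGroup.of (rels := rels₁) 4 = PresentedGroup.of 3 ^ (2 : ℤ) := by
    calc PresentedGroup.of (rels := rels₁) 4
        = (PresentedGroup.of (rels := rels₁) 4 * PresentedGroup.of 3 ^ (-2 : ℤ)) *
            PresentedGroup.of 3 ^ (2 : ℤ) := by group
      _ = PresentedGroup.of 3 ^ (2 : ℤ) := by rw [hD]; group
  rw [hx] at hE
  have hd3 : PresentedGroup.of (rels := rels₁) 3 =
      (PresentedGroup.of (rels := rels₁) 2)⁻¹ * (PresentedGroup.of 1)⁻¹ *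
        (PresentedGroup.of 0)⁻¹ * (PresentedGroup.of (rels := rels₁) 0 ^ (2 : ℤ)) ^ m := by
    calc PresentedGroup.of (rels := rels₁) 3
        = (PresentedGroup.of (rels := rels₁) 2)⁻¹ * (PresentedGroup.of 1)⁻¹ *
            (PresentedGroup.of 0)⁻¹ *
            (PresentedGroup.of (rels := rels₁) 0 * PresentedGroup.of 1 * PresentedGroup.of 2 *
              PresentedGroup.of 3 * (PresentedGroup.of (rels := rels₁) 0 ^ (2 : ℤ)) ^ (-m)) *
            (PresentedGroup.of (rels := rels₁) 0 ^ (2 : ℤ)) ^ m := by group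
      _ = _ := by rw [hE]; group
  -- relator consequences in G₂
  have h2b : PresentedGroup.of (rels := rels₂) 1 ^ (2 : ℤ) =
      PresentedGroup.of (rels := rels₂) 0 ^ (2 : ℤ) := by
    have h := mk_rel_eq_one (rels := rels₂) (Set.mem_insert _ _)
    simp only [map_mul, map_pow, map_zpow, ofmk₂] at h
    calc PresentedGroup.of (rels := rels₂) 1 ^ (2 : ℤ)
        = (PresentedGroup.of (rels := rels₂) 0 ^ 2 * PresentedGroup.of 1 ^ (-2 : ℤ))⁻¹ *
            PresentedGroup.of (rels := rels₂) 0 ^ 2 := by group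
      _ = _ := by rw [h]; group
  have h2c : PresentedGroup.of (rels := rels₂) 2 ^ (2 : ℤ) =
      PresentedGroup.of (rels := rels₂) 0 ^ (2 : ℤ) := by
    have h := mk_rel_eq_one (rels := rels₂)
      (Set.mem_insert_of_mem _ (Set.mem_insert _ _))
    simp only [map_mul, map_pow, map_zpow, ofmk₂] at h
    calc PresentedGroup.of (rels := rels₂) 2 ^ (2 : ℤ)
        = (PresentedGroup.of (rels := rels₂) 0 ^ 2 * PresentedGroup.of 2 ^ (-2 : ℤ))⁻¹ *
            PresentedGroup.of (rels := rels₂) 0 ^ 2 := by group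
      _ = _ := by rw [h]; group
  have h2p : (PresentedGroup.of (rels := rels₂) 0 ^ (2 * m - 1) * (PresentedGroup.of 1)⁻¹ *
        (PresentedGroup.of 2)⁻¹) ^ (2 : ℤ) = PresentedGroup.of (rels := rels₂) 0 ^ (2 : ℤ) := by
    have h := mk_rel_eq_one (rels := rels₂)
      (Set.mem_insert_of_mem _ (Set.mem_insert_of_mem _ rfl))
    simp only [map_mul, map_pow, map_zpow, map_inv, ofmk₂] at h
    calc (PresentedGroup.of (rels := rels₂) 0 ^ (2 * m - 1) * (PresentedGroup.of 1)⁻¹ *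
          (PresentedGroup.of 2)⁻¹) ^ (2 : ℤ)
        = (PresentedGroup.of (rels := rels₂) 0 ^ 2 *
            (PresentedGroup.of (rels := rels₂) 0 ^ (2 * m - 1) * (PresentedGroup.of 1)⁻¹ *
              (PresentedGroup.of 2)⁻¹) ^ (-2 : ℤ))⁻¹ *
            PresentedGroup.of (rels := rels₂) 0 ^ 2 := by group
      _ = _ := by rw [h]; group
  -- the maps
  set f : Fin 5 → PresentedGroup rels₂ :=
    ![(PresentedGroup.of 0)⁻¹, (PresentedGroup.of 1)⁻¹, (PresentedGroup.of 2)⁻¹,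
      PresentedGroup.of 2 * PresentedGroup.of 1 * PresentedGroup.of 0 ^ (1 - 2 * m),
      PresentedGroup.of 0 ^ (-2 : ℤ)] with hfdef
  set g : Fin 3 → PresentedGroup rels₁ :=
    ![(PresentedGroup.of 0)⁻¹, (PresentedGroup.of 1)⁻¹, (PresentedGroup.of 2)⁻¹] with hgdef
  have hf : ∀ r ∈ rels₁, FreeGroup.lift f r = 1 := by
    intro r hr
    simp only [rels₁, Set.mem_insert_iff, Set.mem_singleton_iff] at hr
    obtain rfl | rfl | rfl | rfl | rfl := hr
    · simp only [map_mul, map_zpow, FreeGroup.lift_apply_of, hfdef, Matrix.cons_val_zero,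
        Matrix.cons_val_one, Matrix.head_cons, Matrix.cons_val_two, Matrix.tail_cons,
        Matrix.cons_val_three, Matrix.cons_val_four]
      group
    · simp only [map_mul, map_zpow, FreeGroup.lift_apply_of, hfdef, Matrix.cons_val_zero,
        Matrix.cons_val_one, Matrix.head_cons, Matrix.cons_val_two, Matrix.tail_cons,
        Matrix.cons_val_three, Matrix.cons_val_four]
      rw [show ((PresentedGroup.of (rels := rels₂) 1)⁻¹) ^ (-2 : ℤ) =
        PresentedGroup.of (rels := rels₂) 1 ^ (2 : ℤ) from by group, h2b]
      group
    · simp only [map_mul, map_zpow, FreeGroup.lift_apply_of, hfdef, Matrix.cons_val_zero,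
        Matrix.cons_val_one, Matrix.head_cons, Matrix.cons_val_two, Matrix.tail_cons,
        Matrix.cons_val_three, Matrix.cons_val_four]
      rw [show ((PresentedGroup.of (rels := rels₂) 2)⁻¹) ^ (-2 : ℤ) =
        PresentedGroup.of (rels := rels₂) 2 ^ (2 : ℤ) from by group, h2c]
      group
    · simp only [map_mul, map_zpow, FreeGroup.lift_apply_of, hfdef, Matrix.cons_val_zero,
        Matrix.cons_val_one, Matrix.head_cons, Matrix.cons_val_two, Matrix.tail_cons,
        Matrix.cons_val_three, Matrix.cons_val_four]
      rw [show PresentedGroup.of (rels := rels₂) 2 * PresentedGroup.of 1 *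
            PresentedGroup.of 0 ^ (1 - 2 * m) =
          (PresentedGroup.of (rels := rels₂) 0 ^ (2 * m - 1) * (PresentedGroup.of 1)⁻¹ *
            (PresentedGroup.of 2)⁻¹)⁻¹ from by group,
        show ∀ u : PresentedGroup rels₂, (u⁻¹) ^ (-2 : ℤ) = u ^ (2 : ℤ) from fun u => by group,
        h2p]
      group
    · simp only [map_mul, map_zpow, FreeGroup.lift_apply_of, hfdef, Matrix.cons_val_zero,
        Matrix.cons_val_one, Matrix.head_cons, Matrix.cons_val_two, Matrix.tail_cons,
        Matrix.cons_val_three, Matrix.cons_val_four]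
      group
  have hg : ∀ r ∈ rels₂, FreeGroup.lift g r = 1 := by
    intro r hr
    simp only [rels₂, Set.mem_insert_iff, Set.mem_singleton_iff] at hr
    obtain rfl | rfl | rfl := hr
    · simp only [map_mul, map_zpow, map_pow, map_inv, FreeGroup.lift_apply_of, hgdef,
        Matrix.cons_val_zero, Matrix.cons_val_one, Matrix.head_cons, Matrix.cons_val_two,
        Matrix.tail_cons]
      rw [show ((PresentedGroup.of (rels := rels₁) 0)⁻¹) ^ (2 : ℕ) =
            (PresentedGroup.of (rels := rels₁) 0 ^ (2 : ℤ))⁻¹ from by group, ← hx,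
          show ((PresentedGroup.of (rels := rels₁) 1)⁻¹) ^ (-2 : ℤ) =
            PresentedGroup.of (rels := rels₁) 1 ^ (2 : ℤ) from by group, ← hxb]
      group
    · simp only [map_mul, map_zpow, map_pow, map_inv, FreeGroup.lift_apply_of, hgdef,
        Matrix.cons_val_zero, Matrix.cons_val_one, Matrix.head_cons, Matrix.cons_val_two,
        Matrix.tail_cons]
      rw [show ((PresentedGroup.of (rels := rels₁) 0)⁻¹) ^ (2 : ℕ) =
            (PresentedGroup.of (rels := rels₁) 0 ^ (2 : ℤ))⁻¹ from by group, ← hx,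
          show ((PresentedGroup.of (rels := rels₁) 2)⁻¹) ^ (-2 : ℤ) =
            PresentedGroup.of (rels := rels₁) 2 ^ (2 : ℤ) from by group, ← hxc]
      group
    · simp only [map_mul, map_zpow, map_pow, map_inv, FreeGroup.lift_apply_of, hgdef,
        Matrix.cons_val_zero, Matrix.cons_val_one, Matrix.head_cons, Matrix.cons_val_two,
        Matrix.tail_cons]
      rw [show ((PresentedGroup.of (rels := rels₁) 0)⁻¹) ^ (2 * m - 1) *
            ((PresentedGroup.of (rels := rels₁) 1)⁻¹)⁻¹ *
            ((PresentedGroup.of (rels := rels₁) 2)⁻¹)⁻¹ =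
          ((PresentedGroup.of (rels := rels₁) 2)⁻¹ * (PresentedGroup.of 1)⁻¹ *
            (PresentedGroup.of 0)⁻¹ *
            (PresentedGroup.of (rels := rels₁) 0 ^ (2 : ℤ)) ^ m)⁻¹ from by group, ← hd3,
          show ((PresentedGroup.of (rels := rels₁) 3)⁻¹) ^ (-2 : ℤ) =
            PresentedGroup.of (rels := rels₁) 3 ^ (2 : ℤ) from by group, ← hxd,
          show ((PresentedGroup.of (rels := rels₁) 0)⁻¹) ^ (2 : ℕ) =
            (PresentedGroup.of (rels := rels₁) 0 ^ (2 : ℤ))⁻¹ from by group, ← hx]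
      group
  refine ⟨MonoidHom.toMulEquiv (PresentedGroup.toGroup hf) (PresentedGroup.toGroup hg) ?_ ?_⟩
  · ext i
    fin_cases i <;>
      simp [hfdef, hgdef, toGroup.of]
    · rw [hd3]; group
    · rw [hx]; group
  · ext i
    fin_cases i <;>
      simp [hfdef, hgdef, toGroup.of]
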